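/- Every finite lattice is isomorphic (as a lattice) to the lattice of flats of some finite simplicial complex. -/

import Mathlib

universe u v

/-- `F ⊆ V` is a flat of the simplicial complex `(V, H)`: for every `I ∈ H` with
`I ⊆ F` and every `p ∈ V \ F`, `I ∪ {p} ∈ H`. -/
def IsCFlat {α : Type u} (V : Set α) (H : Set (Set α)) (F : Set α) : Prop :=
  F ⊆ V ∧ ∀ I ∈ H, I ⊆ F → ∀ p ∈ V \ F, insert p I ∈ H

/-- `(V, H)` is a finite simplicial complex: `V` is finite and nonempty, and
`H ⊆ 2^V` is nonempty and closed under taking subsets. -/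
def IsCpx {α : Type u} (V : Set α) (H : Set (Set α)) : Prop :=
  V.Finite ∧ V.Nonempty ∧ H.Nonempty ∧ (∀ X ∈ H, X ⊆ V) ∧ ∀ X ∈ H, ∀ Y ⊆ X, Y ∈ H

/-- `X` is a transversal of the successive differences for some chain
`F 0 ⊂ F 1 ⊂ … ⊂ F k` of flats of `(V, H)`: `X` admits an enumeration
`x 0, …, x (k-1)` with `x i ∈ F (i+1) \ F i`. -/
def TransvSD {α : Type u} (V : Set α) (H : Set (Set α)) (X : Set α) : Prop :=
  ∃ (k : ℕ) (F : Fin (k + 1) → Set α) (x : Fin k → α),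
    (∀ i, IsCFlat V H (F i)) ∧ StrictMono F ∧
    Function.Injective x ∧ X = Set.range x ∧
    ∀ i : Fin k, x i ∈ F i.succ \ F i.castSucc

/-- `(V, H)` is boolean representable: every `X ∈ H` is a transversal of the
successive differences for some chain of flats of `(V, H)`. -/
def BoolRep {α : Type u} (V : Set α) (H : Set (Set α)) : Prop :=
  ∀ X ∈ H, TransvSD V H X

set_option linter.unusedSectionVars false

section Aux
variable {M : Type u} [Lattice M] [OrderBot M]

def foldSup (b : M) (l : List M) : M := l.foldl (· ⊔ ·) b

lemma foldSup_nil (b : M) : foldSup b [] = b := rfl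
lemma foldSup_cons (b z : M) (l : List M) : foldSup b (z :: l) = foldSup (b ⊔ z) l := rfl
lemma foldSup_append (b : M) (u v : List M) :
    foldSup b (u ++ v) = foldSup (foldSup b u) v := List.foldl_append

lemma foldSup_le_iff {b a : M} {l : List M} :
    foldSup b l ≤ a ↔ b ≤ a ∧ ∀ z ∈ l, z ≤ a := by
  induction l generalizing b with
  | nil => simp [foldSup]
  | cons z r ih =>
    rw [foldSup_cons, ih]
    simp [sup_le_iff, and_assoc]

lemma le_foldSup (b : M) (l : List M) : b ≤ foldSup b l :=
  (foldSup_le_iff.mp le_rfl).1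

lemma le_foldSup_of_mem {z : M} {l : List M} (h : z ∈ l) (b : M) : z ≤ foldSup b l :=
  (foldSup_le_iff.mp le_rfl).2 z h

def indepFrom : M → List M → Prop
  | _, [] => True
  | b, z :: r => ¬ z ≤ b ∧ indepFrom (b ⊔ z) r

@[simp] lemma indepFrom_nil (b : M) : indepFrom b ([] : List M) := trivial

lemma indepFrom_cons {b z : M} {r : List M} :
    indepFrom b (z :: r) ↔ ¬ z ≤ b ∧ indepFrom (b ⊔ z) r := Iff.rfl

lemma indepFrom_mono {b b' : M} (h : b' ≤ b) : ∀ {l : List M}, indepFrom b l → indepFrom b' l := by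
  intro l
  induction l generalizing b b' with
  | nil => intro _; trivial
  | cons z r ih =>
    rintro ⟨h1, h2⟩
    exact ⟨fun hz => h1 (hz.trans h), ih (sup_le_sup_right h z) h2⟩

lemma indepFrom_append {b : M} {u v : List M} :
    indepFrom b (u ++ v) ↔ indepFrom b u ∧ indepFrom (foldSup b u) v := by
  induction u generalizing b with
  | nil => simp [foldSup_nil]
  | cons z r ih =>
    simp only [List.cons_append, indepFrom_cons, ih, foldSup_cons, and_assoc]

lemma indepFrom_not_le {b : M} {l : List M} (h : indepFrom b l) {z : M} (hz : z ∈ l) :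
    ¬ z ≤ b := by
  induction l generalizing b with
  | nil => cases hz
  | cons w r ih =>
    rcases List.mem_cons.mp hz with rfl | hz'
    · exact h.1
    · exact fun hle => (ih h.2 hz') (hle.trans le_sup_left)

lemma indepFrom_sublist {l' l : List M} (hs : List.Sublist l' l) : ∀ {b : M}, indepFrom b l → indepFrom b l' := by
  induction hs with
  | slnil => intro b _; trivial
  | cons a _ ih => exact fun h => ih (indepFrom_mono le_sup_left h.2)
  | cons_cons a _ ih => exact fun h => ⟨h.1, ih h.2⟩

lemma exists_spanning (s : Finset M) :
    ∃ l : List M, indepFrom ⊥ l ∧ (∀ z ∈ l, z ∈ s) ∧ s.sup id ≤ foldSup ⊥ l := by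
  classical
  induction s using Finset.induction_on with
  | empty => exact ⟨[], trivial, by simp, by simp⟩
  | @insert x s hx ih =>
    obtain ⟨l, hl, hmem, hsup⟩ := ih
    by_cases hxl : x ≤ foldSup ⊥ l
    · exact ⟨l, hl, fun z hz => Finset.mem_insert_of_mem (hmem z hz),
        by rw [Finset.sup_insert]; exact sup_le hxl hsup⟩
    · refine ⟨l ++ [x], ?_, ?_, ?_⟩
      · exact indepFrom_append.mpr ⟨hl, hxl, trivial⟩
      · intro z hz
        rcases List.mem_append.mp hz with h | h
        · exact Finset.mem_insert_of_mem (hmem z h)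
        · simp only [List.mem_singleton] at h; subst h; exact Finset.mem_insert_self _ _
      · rw [Finset.sup_insert, foldSup_append]
        have h1 : foldSup ⊥ l ≤ foldSup (foldSup ⊥ l) [x] := le_foldSup _ _
        have h2 : x ≤ foldSup (foldSup ⊥ l) [x] := le_foldSup_of_mem (by simp) _
        exact sup_le h2 (hsup.trans h1)

end Aux

section Cpx
variable {M : Type u} [Lattice M] [OrderBot M]

/-- transversal of the list `l`: one point `(z, f z)` for each entry `z` of `l`. -/
def Tr (l : List M) (f : M → Fin 3) : Set (M × Fin 3) :=
  (fun z => (z, f z)) '' {z | z ∈ l}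

lemma mem_Tr {l : List M} {f : M → Fin 3} {p : M × Fin 3} :
    p ∈ Tr l f ↔ ∃ z ∈ l, p = (z, f z) := by
  simp only [Tr, Set.mem_image, Set.mem_setOf_eq]
  constructor
  · rintro ⟨z, hz, rfl⟩; exact ⟨z, hz, rfl⟩
  · rintro ⟨z, hz, rfl⟩; exact ⟨z, hz, rfl⟩

lemma mem_Tr_self {l : List M} {f : M → Fin 3} {z : M} (hz : z ∈ l) : (z, f z) ∈ Tr l f :=
  mem_Tr.mpr ⟨z, hz, rfl⟩

@[simp] lemma Tr_nil (f : M → Fin 3) : Tr ([] : List M) f = ∅ := by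
  ext p; simp [mem_Tr]

/-- the simplicial complex: transversals of independent lists, possibly with a
doubled head `{(w,0),(w,1)}`. -/
def HH : Set (Set (M × Fin 3)) :=
  {X | ∃ l f, indepFrom (⊥ : M) l ∧ X = Tr l f} ∪
  {X | ∃ w l f, ¬ w ≤ (⊥ : M) ∧ indepFrom w l ∧
      X = ({(w, 0), (w, 1)} : Set (M × Fin 3)) ∪ Tr l f}

lemma empty_mem_HH : (∅ : Set (M × Fin 3)) ∈ HH :=
  Or.inl ⟨[], fun _ => 0, trivial, (Tr_nil _).symm⟩

/-- restrict a transversal to a subset -/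
lemma exists_sub {l : List M} {f : M → Fin 3} {Y : Set (M × Fin 3)} (hY : Y ⊆ Tr l f) :
    ∃ l', List.Sublist l' l ∧ Y = Tr l' f := by
  classical
  refine ⟨l.filter (fun z => decide ((z, f z) ∈ Y)), List.filter_sublist, ?_⟩
  ext p
  constructor
  · intro hp
    obtain ⟨z, hz, rfl⟩ := mem_Tr.mp (hY hp)
    exact mem_Tr_self (List.mem_filter.mpr ⟨hz, by simpa using hp⟩)
  · intro hp
    obtain ⟨z, hz, rfl⟩ := mem_Tr.mp hp
    exact of_decide_eq_true (List.mem_filter.mp hz).2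

/-- a transversal together with one extra point `(w,j)`, `w` below nothing in the list,
is a transversal. -/
lemma cons_tr_mem {w : M} {j : Fin 3} {l' : List M} {f : M → Fin 3} {Y : Set (M × Fin 3)}
    (hw : ¬ w ≤ (⊥ : M)) (hl' : indepFrom w l')
    (heq : Y = insert (w, j) (Tr l' f)) : Y ∈ HH := by
  classical
  have hwl' : w ∉ l' := fun h => indepFrom_not_le hl' h le_rfl
  refine Or.inl ⟨w :: l', Function.update f w j, ⟨by simpa using hw, by
      simpa [bot_sup_eq] using hl'⟩, ?_⟩
  rw [heq]
  ext q
  constructor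
  · intro hq
    rcases Set.mem_insert_iff.mp hq with rfl | hq
    · exact mem_Tr.mpr ⟨w, List.mem_cons_self, by simp⟩
    · obtain ⟨z, hz, rfl⟩ := mem_Tr.mp hq
      have hzw : z ≠ w := fun h' => hwl' (h' ▸ hz)
      exact mem_Tr.mpr ⟨z, List.mem_cons_of_mem _ hz, by simp [Function.update_of_ne hzw]⟩
  · intro hq
    obtain ⟨z, hz, rfl⟩ := mem_Tr.mp hq
    rcases List.mem_cons.mp hz with rfl | hz
    · exact Set.mem_insert_iff.mpr (Or.inl (by simp))
    · have hzw : z ≠ w := fun h' => hwl' (h' ▸ hz)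
      refine Set.mem_insert_iff.mpr (Or.inr ?_)
      rw [Function.update_of_ne hzw]
      exact mem_Tr_self hz

lemma HH_subset_closed {X Y : Set (M × Fin 3)} (hX : X ∈ HH) (hYX : Y ⊆ X) : Y ∈ HH := by
  classical
  rcases hX with ⟨l, f, hl, rfl⟩ | ⟨w, l, f, hw, hl, rfl⟩
  · obtain ⟨l', hs, rfl⟩ := exists_sub hYX
    exact Or.inl ⟨l', f, indepFrom_sublist hs hl, rfl⟩
  · obtain ⟨l', hs, hY0eq⟩ := exists_sub (Set.inter_subset_right : Y ∩ Tr l f ⊆ Tr l f)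
    have hl' : indepFrom w l' := indepFrom_sublist hs hl
    have hsub1 : Tr l' f ⊆ Y := by rw [← hY0eq]; exact Set.inter_subset_left
    have hsplit : ∀ q ∈ Y, q = (w, 0) ∨ q = (w, 1) ∨ q ∈ Tr l' f := by
      intro q hq
      rcases hYX hq with h | h
      · rcases h with h | h
        · exact Or.inl h
        · exact Or.inr (Or.inl h)
      · exact Or.inr (Or.inr (by rw [← hY0eq]; exact ⟨hq, h⟩))
    by_cases h0 : (w, 0) ∈ Y <;> by_cases h1 : (w, 1) ∈ Y
    · refine Or.inr ⟨w, l', f, hw, hl', ?_⟩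
      apply Set.Subset.antisymm
      · intro q hq
        rcases hsplit q hq with h | h | h
        · exact Or.inl (Or.inl h)
        · exact Or.inl (Or.inr h)
        · exact Or.inr h
      · rintro q (hq | hq)
        · rcases hq with rfl | rfl
          · exact h0
          · exact h1
        · exact hsub1 hq
    · refine cons_tr_mem (j := 0) (f := f) hw hl' ?_
      apply Set.Subset.antisymm
      · intro q hq
        rcases hsplit q hq with h | h | h
        · exact Or.inl h
        · exact absurd (h ▸ hq) (h ▸ h1)
        · exact Or.inr h
      · rintro q (rfl | hq)
        · exact h0
        · exact hsub1 hq
    · refine cons_tr_mem (j := 1) (f := f) hw hl' ?_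
      apply Set.Subset.antisymm
      · intro q hq
        rcases hsplit q hq with h | h | h
        · exact absurd (h ▸ hq) (h ▸ h0)
        · exact Or.inl h
        · exact Or.inr h
      · rintro q (rfl | hq)
        · exact h1
        · exact hsub1 hq
    · refine Or.inl ⟨l', f, indepFrom_mono bot_le hl', ?_⟩
      apply Set.Subset.antisymm
      · intro q hq
        rcases hsplit q hq with h | h | h
        · exact absurd (h ▸ hq) (h ▸ h0)
        · exact absurd (h ▸ hq) (h ▸ h1)
        · exact h
      · exact hsub1

end Cpx

section Flats
variable {M : Type u} [Lattice M] [OrderBot M]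

lemma eq_of_mem_Tr {l : List M} {f : M → Fin 3} {p : M × Fin 3} (h : p ∈ Tr l f) :
    p = (p.1, f p.1) := by
  obtain ⟨z, hz, rfl⟩ := mem_Tr.mp h; rfl

lemma fst_mem_of_mem_Tr {l : List M} {f : M → Fin 3} {p : M × Fin 3} (h : p ∈ Tr l f) :
    p.1 ∈ l := by
  obtain ⟨z, hz, rfl⟩ := mem_Tr.mp h; exact hz

lemma Tr_append_eq [DecidableEq M] {l : List M} {f : M → Fin 3} {y : M} (hy : y ∉ l) (i : Fin 3) :
    Tr (l ++ [y]) (Function.update f y i) = insert (y, i) (Tr l f) := by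
  classical
  ext q
  constructor
  · intro hq
    obtain ⟨z, hz, rfl⟩ := mem_Tr.mp hq
    rcases List.mem_append.mp hz with hz' | hz'
    · have hzy : z ≠ y := fun h => hy (h ▸ hz')
      rw [Function.update_of_ne hzy]
      exact Set.mem_insert_iff.mpr (Or.inr (mem_Tr_self hz'))
    · simp only [List.mem_singleton] at hz'
      subst hz'
      exact Set.mem_insert_iff.mpr (Or.inl (by simp))
  · intro hq
    rcases Set.mem_insert_iff.mp hq with rfl | hq
    · exact mem_Tr.mpr ⟨y, by simp, by simp⟩
    · obtain ⟨z, hz, rfl⟩ := mem_Tr.mp hq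
      have hzy : z ≠ y := fun h => hy (h ▸ hz)
      exact mem_Tr.mpr ⟨z, by simp [hz], by simp [Function.update_of_ne hzy]⟩

def Fa (a : M) : Set (M × Fin 3) := {p | p.1 ≤ a}

lemma mem_Fa {a : M} {p : M × Fin 3} : p ∈ Fa a ↔ p.1 ≤ a := Iff.rfl

lemma isCFlat_Fa (a : M) : IsCFlat Set.univ HH (Fa a) := by
  classical
  refine ⟨Set.subset_univ _, ?_⟩
  rintro I hI hIF ⟨y, i⟩ ⟨-, hpa⟩
  have hya : ¬ y ≤ a := hpa
  rcases hI with ⟨l, f, hl, rfl⟩ | ⟨w, l, f, hw, hl, rfl⟩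
  · have hla : ∀ z ∈ l, z ≤ a := fun z hz => hIF (mem_Tr_self hz)
    have hfold : foldSup ⊥ l ≤ a := foldSup_le_iff.mpr ⟨bot_le, hla⟩
    have hyl : y ∉ l := fun h => hya (hla y h)
    refine Or.inl ⟨l ++ [y], Function.update f y i, ?_, ?_⟩
    · exact indepFrom_append.mpr ⟨hl, fun hle => hya (hle.trans hfold), trivial⟩
    · rw [Tr_append_eq hyl i]
  · have hwa : w ≤ a := hIF (Set.mem_union_left _ (Set.mem_insert _ _))
    have hla : ∀ z ∈ l, z ≤ a := fun z hz => hIF (Set.mem_union_right _ (mem_Tr_self hz))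
    have hfold : foldSup w l ≤ a := foldSup_le_iff.mpr ⟨hwa, hla⟩
    have hyl : y ∉ l := fun h => hya (hla y h)
    refine Or.inr ⟨w, l ++ [y], Function.update f y i, hw, ?_, ?_⟩
    · exact indepFrom_append.mpr ⟨hl, fun hle => hya (hle.trans hfold), trivial⟩
    · rw [Tr_append_eq hyl i, Set.union_insert]

lemma flat_mem_of_le_bot {F : Set (M × Fin 3)} (hF : IsCFlat Set.univ HH F) {x : M}
    (hx : x ≤ ⊥) (j : Fin 3) : (x, j) ∈ F := by
  by_contra hxj
  have h := hF.2 ∅ empty_mem_HH (Set.empty_subset F) (x, j) ⟨Set.mem_univ _, hxj⟩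
  rcases h with ⟨l, f, hl, heq⟩ | ⟨w, l, f, hw, hl, heq⟩
  · have hmem : ((x, j) : M × Fin 3) ∈ Tr l f := heq ▸ Set.mem_insert _ _
    exact indepFrom_not_le hl (fst_mem_of_mem_Tr hmem) hx
  · have h0 : ((w, (0 : Fin 3)) : M × Fin 3) ∈ insert (x, j) (∅ : Set (M × Fin 3)) :=
      heq ▸ Set.mem_union_left _ (Set.mem_insert _ _)
    have h1 : ((w, (1 : Fin 3)) : M × Fin 3) ∈ insert (x, j) (∅ : Set (M × Fin 3)) :=
      heq ▸ Set.mem_union_left _ (Set.mem_insert_of_mem _ rfl)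
    simp only [Set.mem_insert_iff, Set.mem_empty_iff_false, or_false, Prod.mk.injEq] at h0 h1
    rw [← h1.2] at h0
    exact absurd h0.2 (by decide)

lemma flat_saturated {F : Set (M × Fin 3)} (hF : IsCFlat Set.univ HH F) {x : M} {i : Fin 3}
    (hxi : (x, i) ∈ F) (j : Fin 3) : (x, j) ∈ F := by
  classical
  by_cases hxb : x ≤ ⊥
  · exact flat_mem_of_le_bot hF hxb j
  by_contra hxj
  obtain ⟨i', j', hi', hj', hg1, hg2⟩ :
      ∃ i' j' : Fin 3, (x, i') ∈ F ∧ (x, j') ∉ F ∧ ¬(i' = 0 ∧ j' = 1) ∧ ¬(i' = 1 ∧ j' = 0) := by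
    by_cases hb : (i = 0 ∧ j = 1) ∨ (i = 1 ∧ j = 0)
    · by_cases h2 : (x, (2 : Fin 3)) ∈ F
      · exact ⟨2, j, h2, hxj, by simp, by simp⟩
      · refine ⟨i, 2, hxi, h2, ?_, ?_⟩ <;> rcases hb with ⟨rfl, rfl⟩ | ⟨rfl, rfl⟩ <;> simp
    · push_neg at hb
      refine ⟨i, j, hxi, hxj, ?_, ?_⟩ <;> tauto
  have hi'j' : i' ≠ j' := fun h => hj' (h ▸ hi')
  have hIH : ({((x, i') : M × Fin 3)} : Set (M × Fin 3)) ∈ HH := by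
    refine Or.inl ⟨[x], fun _ => i', ⟨by simpa using hxb, trivial⟩, ?_⟩
    ext q
    simp [mem_Tr]
  have hsub : ({((x, i') : M × Fin 3)} : Set (M × Fin 3)) ⊆ F := by
    intro q hq; rw [Set.mem_singleton_iff] at hq; subst hq; exact hi'
  have h := hF.2 _ hIH hsub (x, j') ⟨Set.mem_univ _, hj'⟩
  have hmemJ : ∀ q : M × Fin 3, q ∈ (insert ((x, j') : M × Fin 3) {((x, i') : M × Fin 3)} : Set (M × Fin 3)) ↔
      (q = (x, j') ∨ q = (x, i')) := by
    intro q
    simp only [Set.mem_insert_iff, Set.mem_singleton_iff]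
  rcases h with ⟨l, f, hl, heq⟩ | ⟨w, l, f, hw, hl, heq⟩
  · have h1 : ((x, j') : M × Fin 3) ∈ Tr l f := heq ▸ Set.mem_insert _ _
    have h2 : ((x, i') : M × Fin 3) ∈ Tr l f := heq ▸ Set.mem_insert_of_mem _ rfl
    have e1 := eq_of_mem_Tr h1
    have e2 := eq_of_mem_Tr h2
    simp only [Prod.mk.injEq] at e1 e2
    exact hi'j' (e2.2.trans e1.2.symm)
  · -- determine w = x, and no Tr-part elements
    have hw0 : ((w, (0 : Fin 3)) : M × Fin 3) ∈ insert ((x, j') : M × Fin 3) {((x, i') : M × Fin 3)} :=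
      heq.symm ▸ Set.mem_union_left _ (Set.mem_insert _ _)
    have hwx : w = x := by
      rcases (hmemJ _).mp hw0 with h' | h' <;>
        simpa using congrArg Prod.fst h'
    have hTr_sub : ∀ q : M × Fin 3, q ∈ Tr l f → False := by
      intro q hq
      have hqJ : q ∈ insert ((x, j') : M × Fin 3) {((x, i') : M × Fin 3)} :=
        heq.symm ▸ Set.mem_union_right _ hq
      have hqx : q.1 = x := by
        rcases (hmemJ _).mp hqJ with h' | h' <;> simp [h']
      have := indepFrom_not_le hl (fst_mem_of_mem_Tr hq)
      rw [hqx, hwx] at this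
      exact this le_rfl
    have hii : ((x, i') : M × Fin 3) ∈ ({(w, 0), (w, 1)} : Set (M × Fin 3)) ∪ Tr l f :=
      heq ▸ Set.mem_insert_of_mem _ rfl
    have hjj : ((x, j') : M × Fin 3) ∈ ({(w, 0), (w, 1)} : Set (M × Fin 3)) ∪ Tr l f :=
      heq ▸ Set.mem_insert _ _
    have hi01 : i' = 0 ∨ i' = 1 := by
      rcases hii with h' | h'
      · rcases h' with h' | h' <;> [left; right] <;>
          simpa using (congrArg Prod.snd h')
      · exact absurd h' (fun hh => hTr_sub _ hh)
    have hj01 : j' = 0 ∨ j' = 1 := by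
      rcases hjj with h' | h'
      · rcases h' with h' | h' <;> [left; right] <;>
          simpa using (congrArg Prod.snd h')
      · exact absurd h' (fun hh => hTr_sub _ hh)
    rcases hi01 with rfl | rfl <;> rcases hj01 with rfl | rfl
    · exact hi'j' rfl
    · exact hg1 ⟨rfl, rfl⟩
    · exact hg2 ⟨rfl, rfl⟩
    · exact hi'j' rfl

end Flats

section Main
variable {M : Type u} [Lattice M] [OrderBot M] [Fintype M]

noncomputable def supF (F : Set (M × Fin 3)) : M :=
  ((Set.toFinite F).toFinset).sup Prod.fst

lemma le_supF {F : Set (M × Fin 3)} {p : M × Fin 3} (hp : p ∈ F) : p.1 ≤ supF F :=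
  Finset.le_sup ((Set.Finite.mem_toFinset _).mpr hp)

lemma supF_le {F : Set (M × Fin 3)} {a : M} (h : ∀ p ∈ F, p.1 ≤ a) : supF F ≤ a :=
  Finset.sup_le fun p hp => h p ((Set.Finite.mem_toFinset _).mp hp)

lemma flat_top_mem {F : Set (M × Fin 3)} (hF : IsCFlat Set.univ HH F) :
    ((supF F, (0 : Fin 3)) : M × Fin 3) ∈ F := by
  classical
  by_contra h0
  have hnone : ∀ i : Fin 3, (supF F, i) ∉ F := fun i hi => h0 (flat_saturated hF hi 0)
  set a := supF F with ha
  set s' : Finset M := Finset.image Prod.fst (Set.toFinite F).toFinset with hs'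
  have hs'sup : s'.sup id = a := by rw [hs', Finset.sup_image]; rfl
  obtain ⟨l, hl, hmem, hsup⟩ := exists_spanning s'
  have hmemF : ∀ z ∈ l, ((z, (0 : Fin 3)) : M × Fin 3) ∈ F := by
    intro z hz
    obtain ⟨p, hp, hpz⟩ := Finset.mem_image.mp (hmem z hz)
    have hpF : p ∈ F := (Set.Finite.mem_toFinset _).mp hp
    have hpF' : ((p.1, p.2) : M × Fin 3) ∈ F := by simpa using hpF
    exact hpz ▸ flat_saturated hF hpF' 0
  have hIH : Tr l (fun _ => (0 : Fin 3)) ∈ HH := Or.inl ⟨l, _, hl, rfl⟩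
  have hIsub : Tr l (fun _ => (0 : Fin 3)) ⊆ F := by
    intro q hq
    obtain ⟨z, hz, rfl⟩ := mem_Tr.mp hq
    exact hmemF z hz
  have hJ := hF.2 _ hIH hIsub (a, 0) ⟨Set.mem_univ _, hnone 0⟩
  have hla : ∀ z ∈ l, z ≤ a := fun z hz => le_supF (hmemF z hz)
  have hanl : a ∉ l := fun h => hnone 0 (hmemF a h)
  rcases hJ with ⟨l₂, f₂, hl₂, heq⟩ | ⟨w, l₂, f₂, hw, hl₂, heq⟩
  · have haf : ((a, (0 : Fin 3)) : M × Fin 3) ∈ Tr l₂ f₂ := heq ▸ Set.mem_insert _ _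
    have hal₂ : a ∈ l₂ := fst_mem_of_mem_Tr haf
    obtain ⟨u, v, huv⟩ := List.append_of_mem hal₂
    subst huv
    rw [indepFrom_append] at hl₂
    apply hl₂.2.1
    have hmem₂ : ∀ z ∈ l, z ∈ u := by
      intro z hz
      have hz₂ : z ∈ u ++ a :: v := by
        have hm : ((z, (0 : Fin 3)) : M × Fin 3) ∈ Tr (u ++ a :: v) f₂ :=
          heq ▸ Set.mem_insert_of_mem _ (mem_Tr_self hz)
        exact fst_mem_of_mem_Tr hm
      rcases List.mem_append.mp hz₂ with h' | h'
      · exact h'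
      · rcases List.mem_cons.mp h' with rfl | h''
        · exact absurd hz hanl
        · exact absurd ((hla z hz).trans le_sup_right) (indepFrom_not_le hl₂.2.2 h'')
    have hfo : foldSup ⊥ l ≤ foldSup ⊥ u :=
      foldSup_le_iff.mpr ⟨bot_le, fun z hz => le_foldSup_of_mem (hmem₂ z hz) _⟩
    calc a = s'.sup id := hs'sup.symm
      _ ≤ foldSup ⊥ l := hsup
      _ ≤ foldSup ⊥ u := hfo
  · have hw1 : ((w, (1 : Fin 3)) : M × Fin 3) ∈
        insert ((a, (0 : Fin 3)) : M × Fin 3) (Tr l (fun _ => (0 : Fin 3))) :=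
      heq.symm ▸ Set.mem_union_left _ (Set.mem_insert_of_mem _ rfl)
    rcases Set.mem_insert_iff.mp hw1 with h' | h'
    · exact absurd (congrArg Prod.snd h') (by simp)
    · obtain ⟨z, hz, hzz⟩ := mem_Tr.mp h'
      exact absurd (congrArg Prod.snd hzz) (by simp)

lemma flat_eq_Fa {F : Set (M × Fin 3)} (hF : IsCFlat Set.univ HH F) : F = Fa (supF F) := by
  classical
  apply Set.Subset.antisymm
  · intro p hp
    exact le_supF hp
  · rintro ⟨y, k⟩ hyk
    have hya : y ≤ supF F := hyk
    by_contra hpF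
    have hy0 : ((y, (0 : Fin 3)) : M × Fin 3) ∉ F := fun h => hpF (flat_saturated hF h k)
    by_cases hab : supF F ≤ ⊥
    · exact hy0 (flat_mem_of_le_bot hF (hya.trans hab) 0)
    have ha0 : ((supF F, (0 : Fin 3)) : M × Fin 3) ∈ F := flat_top_mem hF
    have ha1 : ((supF F, (1 : Fin 3)) : M × Fin 3) ∈ F := flat_saturated hF ha0 1
    set a := supF F with ha
    have hya' : y ≠ a := fun h => hy0 (h ▸ ha0)
    have hIH : ({(a, 0), (a, 1)} : Set (M × Fin 3)) ∈ HH := by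
      refine Or.inr ⟨a, [], fun _ => 0, hab, trivial, ?_⟩
      rw [Tr_nil, Set.union_empty]
    have hIsub : ({(a, 0), (a, 1)} : Set (M × Fin 3)) ⊆ F := by
      intro q hq
      rcases Set.mem_insert_iff.mp hq with rfl | hq'
      · exact ha0
      · rw [Set.mem_singleton_iff] at hq'
        subst hq'
        exact ha1
    have hJ := hF.2 _ hIH hIsub (y, 0) ⟨Set.mem_univ _, hy0⟩
    rcases hJ with ⟨l, f, hl, heq⟩ | ⟨w, l, f, hw, hl, heq⟩
    · have h1 : ((a, (0 : Fin 3)) : M × Fin 3) ∈ Tr l f :=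
        heq ▸ Set.mem_insert_of_mem _ (Set.mem_insert _ _)
      have h2 : ((a, (1 : Fin 3)) : M × Fin 3) ∈ Tr l f :=
        heq ▸ Set.mem_insert_of_mem _ (Set.mem_insert_of_mem _ rfl)
      have e1 := eq_of_mem_Tr h1
      have e2 := eq_of_mem_Tr h2
      simp only [Prod.mk.injEq] at e1 e2
      exact absurd (e1.2.trans e2.2.symm) (by decide)
    · have hw1 : ((w, (1 : Fin 3)) : M × Fin 3) ∈
          insert ((y, (0 : Fin 3)) : M × Fin 3) ({(a, 0), (a, 1)} : Set (M × Fin 3)) :=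
        heq.symm ▸ Set.mem_union_left _ (Set.mem_insert_of_mem _ rfl)
      have hwa : w = a := by
        rcases Set.mem_insert_iff.mp hw1 with h' | h'
        · exact absurd (congrArg Prod.snd h') (by simp)
        · rcases Set.mem_insert_iff.mp h' with h' | h'
          · exact absurd (congrArg Prod.snd h') (by simp)
          · rw [Set.mem_singleton_iff] at h'
            exact congrArg Prod.fst h'
      have hy0J : ((y, (0 : Fin 3)) : M × Fin 3) ∈ ({(w, 0), (w, 1)} : Set (M × Fin 3)) ∪ Tr l f :=
        heq ▸ Set.mem_insert _ _
      rcases hy0J with h' | h'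
      · rcases Set.mem_insert_iff.mp h' with h' | h'
        · exact hya' ((congrArg Prod.fst h').trans hwa)
        · rw [Set.mem_singleton_iff] at h'
          exact absurd (congrArg Prod.snd h') (by simp)
      · have hnl := indepFrom_not_le hl (fst_mem_of_mem_Tr h')
        rw [hwa] at hnl
        exact hnl hya

end Main

/-- Every finite lattice is isomorphic to the lattice of flats of some
finite simplicial complex. -/
theorem stmt0 (L : Type u) [Lattice L] [Fintype L] [Nonempty L] :
    ∃ (α : Type u) (V : Set α) (H : Set (Set α)), IsCpx V H ∧
      Nonempty (L ≃o {F : Set α // IsCFlat V H F}) := by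
  classical
  obtain ⟨b0, hb0⟩ : ∃ b : L, ∀ x : L, b ≤ x :=
    ⟨Finset.inf' Finset.univ Finset.univ_nonempty id,
      fun x => Finset.inf'_le id (Finset.mem_univ x)⟩
  letI : OrderBot L := { bot := b0, bot_le := hb0 }
  refine ⟨L × Fin 3, Set.univ, HH,
    ⟨Set.finite_univ, Set.univ_nonempty, ⟨∅, empty_mem_HH⟩, fun X _ => Set.subset_univ X,
      fun X hX Y hY => HH_subset_closed hX hY⟩, ⟨?_⟩⟩
  refine
    { toFun := fun a => ⟨Fa a, isCFlat_Fa a⟩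
      invFun := fun F => supF F.1
      left_inv := ?_
      right_inv := ?_
      map_rel_iff' := ?_ }
  · intro a
    apply le_antisymm
    · exact supF_le (fun p hp => hp)
    · exact le_supF (show ((a, (0 : Fin 3)) : L × Fin 3) ∈ Fa a from le_refl a)
  · intro F
    exact Subtype.ext (flat_eq_Fa F.2).symm
  · intro a b
    constructor
    · intro h
      exact h (show ((a, (0 : Fin 3)) : L × Fin 3) ∈ Fa a from le_refl a)
    · intro h p hp
      exact le_trans hp h
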